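/- Let ℓ be a prime number, and let L ⊆ L̃ ⊆ Ẽ be finite separable field extensions such that the degree [Ẽ : L̃] is coprime to ℓ. Let Ê be a Galois closure of Ẽ over L. Then for every Sylow ℓ-subgroup S of Gal(Ê/L), there exists σ ∈ Gal(Ê/L) such that the compositum L̃ · Ê^S inside Ê contains σ(Ẽ). -/

import Mathlib

open scoped Pointwise

/-- Group-theoretic core: if `H ≤ K`, `P ≤ K` is a `p`-group and `p ∤ [K : H]`,
then some conjugate of `H` contains `P`. -/
lemma stmt_0_aux {G : Type*} [Group G] [Finite G] {p : ℕ} (hp : p.Prime)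
    {H K P : Subgroup G} (hHK : H ≤ K) (hPK : P ≤ K) (hP : IsPGroup p P)
    (hrel : ¬ p ∣ H.relIndex K) :
    ∃ g : G, P ≤ MulAut.conj g • H := by
  haveI : Fact p.Prime := ⟨hp⟩
  have hP' : IsPGroup p (P.subgroupOf K) :=
    hP.of_equiv (Subgroup.subgroupOfEquivOfLe hPK).symm
  have hcard : Nat.card (↥K ⧸ H.subgroupOf K) = H.relIndex K := rfl
  obtain ⟨q, hq⟩ := hP'.nonempty_fixed_point_of_prime_not_dvd_card
    (↥K ⧸ H.subgroupOf K) (by rwa [hcard])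
  obtain ⟨k, rfl⟩ := QuotientGroup.mk_surjective q
  refine ⟨(k : G), fun x hx => ?_⟩
  have hxK : x ∈ K := hPK hx
  have hfix := hq (⟨⟨x, hxK⟩, hx⟩ : P.subgroupOf K)
  have hsmul : (⟨x, hxK⟩ : ↥K) • (QuotientGroup.mk k : ↥K ⧸ H.subgroupOf K)
      = QuotientGroup.mk k := hfix
  rw [MulAction.Quotient.smul_mk, QuotientGroup.eq] at hsmul
  have hmem : ((⟨x, hxK⟩ : ↥K) • k)⁻¹ * k ∈ H.subgroupOf K := hsmul
  rw [Subgroup.mem_subgroupOf] at hmem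
  have hmem' : (k : G)⁻¹ * x⁻¹ * k ∈ H := by
    simpa [mul_assoc] using hmem
  rw [Subgroup.mem_pointwise_smul_iff_inv_smul_mem]
  have : (k : G)⁻¹ * x * k ∈ H := by
    have := H.inv_mem hmem'
    simpa [mul_assoc] using this
  simpa [MulAut.conj, mul_assoc] using this

/-- Let `ℓ` be a prime, `L ⊆ L̃ ⊆ Ẽ` finite separable field extensions
with `[Ẽ : L̃]` coprime to `ℓ`, and let `Ê` be a Galois closure of `Ẽ` over `L`.
Then for every Sylow `ℓ`-subgroup `S` of `Gal(Ê/L)` there is `σ ∈ Gal(Ê/L)` such that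
the compositum `L̃ ⊔ Ê^S` contains `σ(Ẽ)`. -/
theorem stmt_0 {ℓ : ℕ} (hℓ : ℓ.Prime) {L Ehat : Type*} [Field L] [Field Ehat]
    [Algebra L Ehat] [FiniteDimensional L Ehat] [IsGalois L Ehat]
    (Lt Et : IntermediateField L Ehat) (hLE : Lt ≤ Et)
    (hGalClosure : IntermediateField.normalClosure L (↥Et) Ehat = ⊤)
    (hcop : Nat.Coprime (Module.finrank ↥Lt ↥(IntermediateField.extendScalars hLE)) ℓ)
    (S : Sylow ℓ (Ehat ≃ₐ[L] Ehat)) :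
    ∃ σ : Ehat ≃ₐ[L] Ehat,
      Et.map σ.toAlgHom ≤ Lt ⊔ IntermediateField.fixedField (S : Subgroup (Ehat ≃ₐ[L] Ehat)) := by
  classical
  set G := Ehat ≃ₐ[L] Ehat
  set H : Subgroup G := Et.fixingSubgroup with hH
  set K : Subgroup G := Lt.fixingSubgroup with hK
  have hHK : H ≤ K := fun σ hσ => fun x => hσ ⟨x, hLE x.2⟩
  -- the relative index equals the field degree
  have hrelindex : H.relIndex K = Module.finrank ↥Lt ↥(IntermediateField.extendScalars hLE) := by
    have hKcard : Nat.card K = Module.finrank ↥Lt Ehat := by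
      rw [IsGalois.card_fixingSubgroup_eq_finrank]
    have hHcard : Nat.card H = Module.finrank ↥Et Ehat := by
      rw [IsGalois.card_fixingSubgroup_eq_finrank]
    have h1 : H.relIndex K * Nat.card H = Nat.card K := by
      rw [show Nat.card H = Nat.card (H.subgroupOf K) from
        Nat.card_congr (Subgroup.subgroupOfEquivOfLe hHK).toEquiv.symm]
      exact Subgroup.index_mul_card (H.subgroupOf K)
    have h2 : Module.finrank ↥Lt ↥(IntermediateField.extendScalars hLE) *
        Module.finrank ↥(IntermediateField.extendScalars hLE) Ehat
        = Module.finrank ↥Lt Ehat :=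
      Module.finrank_mul_finrank _ _ _
    have h3 : Module.finrank ↥(IntermediateField.extendScalars hLE) Ehat
        = Module.finrank ↥Et Ehat := rfl
    have h4 : H.relIndex K * Nat.card H
        = Module.finrank ↥Lt ↥(IntermediateField.extendScalars hLE) * Nat.card H := by
      rw [h1, hKcard, ← h2, h3, hHcard]
    exact Nat.eq_of_mul_eq_mul_right Nat.card_pos h4
  have hnot_dvd : ¬ ℓ ∣ H.relIndex K := by
    rw [hrelindex]
    intro hdvd
    have := hcop.symm.eq_one_of_dvd hdvd
    exact hℓ.one_lt.ne' this
  have hPK : K ⊓ (S : Subgroup G) ≤ K := inf_le_left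
  have hP : IsPGroup ℓ ((K ⊓ ↑S : Subgroup G)) := S.isPGroup'.to_inf_right
  obtain ⟨σ, hσ⟩ := stmt_0_aux hℓ hHK hPK hP hnot_dvd
  refine ⟨σ, ?_⟩
  have hfix : IntermediateField.fixingSubgroup
      (Lt ⊔ IntermediateField.fixedField (↑S : Subgroup G)) = K ⊓ ↑S := by
    have hsup := (IsGalois.galoisInsertionIntermediateFieldSubgroup (F := L)
      (E := Ehat)).gc.l_sup (a₁ := Lt) (a₂ := IntermediateField.fixedField (↑S : Subgroup G))
    simp only [Function.comp] at hsup
    have : IntermediateField.fixingSubgroup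
        (Lt ⊔ IntermediateField.fixedField (↑S : Subgroup G))
        = Lt.fixingSubgroup ⊓ IntermediateField.fixingSubgroup
            (IntermediateField.fixedField (↑S : Subgroup G)) := hsup
    rw [this, IntermediateField.fixingSubgroup_fixedField]
  rw [← IsGalois.fixedField_fixingSubgroup
      (Lt ⊔ IntermediateField.fixedField (↑S : Subgroup G)), hfix,
    IntermediateField.le_iff_le]
  rw [IsGalois.map_fixingSubgroup]
  exact hσ
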